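/- Let θ be a probability measure on ℝ² with coordinate marginals μ and ν, and suppose θ is absolutely continuous with respect to the product measure μ×ν, with Radon–Nikodym density f. For a Borel set T ⊆ ℝ define κ_T(x) = ∫_T (f(x,y) − 1) dν(y). Then the alpha-mixing coefficient satisfies α = sup over Borel T ⊆ ℝ of ∫_ℝ (κ_T(x))_+ dμ(x), where (x)_+ = max{x,0}. -/

import Mathlib

open MeasureTheory

/-- Let `θ` be a probability measure on `ℝ²` with coordinate marginals `μ`, `ν`, absolutely
continuous w.r.t. `μ × ν` with (real-valued) Radon–Nikodym density `f`.  With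
`κ_T(x) = ∫_T (f(x,y) − 1) dν(y)`, the alpha-mixing coefficient
`α = sup_{S,T} |θ(S×T) − μ(S)ν(T)|` satisfies `α = sup_T ∫ (κ_T(x))₊ dμ(x)`. -/
theorem alpha_real_eq_sup_integral_pos_part
    (θ : Measure (ℝ × ℝ)) [IsProbabilityMeasure θ]
    (hac : θ ≪ (θ.map Prod.fst).prod (θ.map Prod.snd))
    (f : ℝ × ℝ → ℝ) (hf_meas : Measurable f) (hf_nn : ∀ p, 0 ≤ f p)
    (hf_int : Integrable f ((θ.map Prod.fst).prod (θ.map Prod.snd)))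
    (hf_density : ∀ E : Set (ℝ × ℝ), MeasurableSet E →
      (θ E).toReal = ∫ p in E, f p ∂((θ.map Prod.fst).prod (θ.map Prod.snd))) :
    sSup {x : ℝ | ∃ S T : Set ℝ, MeasurableSet S ∧ MeasurableSet T ∧
        x = |(θ (S ×ˢ T)).toReal -
              ((θ.map Prod.fst) S).toReal * ((θ.map Prod.snd) T).toReal|}
      = sSup {x : ℝ | ∃ T : Set ℝ, MeasurableSet T ∧
        x = ∫ x', max (∫ y in T, (f (x', y) - 1) ∂(θ.map Prod.snd)) 0
              ∂(θ.map Prod.fst)} := by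
  classical
  set μ := θ.map Prod.fst with hμ
  set ν := θ.map Prod.snd with hν
  haveI : IsProbabilityMeasure μ := Measure.isProbabilityMeasure_map measurable_fst.aemeasurable
  haveI : IsProbabilityMeasure ν := Measure.isProbabilityMeasure_map measurable_snd.aemeasurable
  have hg_int : Integrable (fun p : ℝ × ℝ => f p - 1) (μ.prod ν) :=
    hf_int.sub (integrable_const 1)
  -- key identity: θ(S×T) - μ(S)ν(T) = ∫_S ∫_T (f - 1)
  have key : ∀ S T : Set ℝ, MeasurableSet S → MeasurableSet T →
      (θ (S ×ˢ T)).toReal - (μ S).toReal * (ν T).toReal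
      = ∫ x in S, ∫ y in T, (f (x, y) - 1) ∂ν ∂μ := by
    intro S T hS hT
    have hrestr : Integrable (fun p : ℝ × ℝ => f p - 1)
        ((μ.restrict S).prod (ν.restrict T)) := by
      rw [Measure.prod_restrict]
      exact hg_int.restrict
    have h1 : ∫ x in S, ∫ y in T, (f (x, y) - 1) ∂ν ∂μ
        = ∫ p in S ×ˢ T, (f p - 1) ∂(μ.prod ν) := by
      rw [← Measure.prod_restrict]
      exact (MeasureTheory.integral_prod _ hrestr).symm
    rw [h1, integral_sub hf_int.restrict (integrable_const 1).restrict,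
      setIntegral_const, ← hf_density _ (hS.prod hT), measureReal_def, Measure.prod_prod,
      ENNReal.toReal_mul, smul_eq_mul, mul_one]
  -- properties of κ_T
  have hκ : ∀ T : Set ℝ, MeasurableSet T →
      Integrable (fun x => ∫ y in T, (f (x, y) - 1) ∂ν) μ ∧
      StronglyMeasurable (fun x => ∫ y in T, (f (x, y) - 1) ∂ν) := by
    intro T hT
    have hFeq : (fun x => ∫ y in T, (f (x, y) - 1) ∂ν)
        = fun x => ∫ y, (Set.univ ×ˢ T).indicator (fun p : ℝ × ℝ => f p - 1) (x, y) ∂ν := by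
      funext x
      have : (fun y => (Set.univ ×ˢ T).indicator (fun p : ℝ × ℝ => f p - 1) (x, y))
          = T.indicator (fun y => f (x, y) - 1) := by
        funext y
        by_cases hy : y ∈ T <;>
          simp [Set.indicator, hy]
      rw [this, integral_indicator hT]
    have hFint : Integrable ((Set.univ ×ˢ T).indicator (fun p : ℝ × ℝ => f p - 1))
        (μ.prod ν) := hg_int.indicator (MeasurableSet.univ.prod hT)
    have hFmeas : StronglyMeasurable
        ((Set.univ ×ˢ T).indicator (fun p : ℝ × ℝ => f p - 1)) :=
      (((hf_meas.sub measurable_const).indicator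
        (MeasurableSet.univ.prod hT))).stronglyMeasurable
    constructor
    · rw [hFeq]; exact hFint.integral_prod_left
    · rw [hFeq]; exact hFmeas.integral_prod_right'
  -- total integral of κ_T is 0
  have hzero : ∀ T : Set ℝ, MeasurableSet T →
      ∫ x, ∫ y in T, (f (x, y) - 1) ∂ν ∂μ = 0 := by
    intro T hT
    have := key Set.univ T MeasurableSet.univ hT
    rw [Measure.restrict_univ] at this
    rw [← this]
    have h1 : θ (Set.univ ×ˢ T) = ν T := by
      rw [hν, Measure.map_apply measurable_snd hT, Set.univ_prod]
    rw [h1]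
    simp
  -- positive-part integral equals the integral over {κ_T > 0}
  have hpos : ∀ T : Set ℝ, MeasurableSet T →
      ∫ x, max (∫ y in T, (f (x, y) - 1) ∂ν) 0 ∂μ
      = ∫ x in {x | 0 < ∫ y in T, (f (x, y) - 1) ∂ν},
          ∫ y in T, (f (x, y) - 1) ∂ν ∂μ := by
    intro T hT
    obtain ⟨hint, hmeas⟩ := hκ T hT
    set g : ℝ → ℝ := fun x => ∫ y in T, (f (x, y) - 1) ∂ν with hg
    have hS₀ : MeasurableSet {x | 0 < g x} :=
      measurableSet_lt measurable_const hmeas.measurable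
    have : (fun x => max (g x) 0) = {x | 0 < g x}.indicator g := by
      funext x
      by_cases hx : 0 < g x
      · simp [Set.indicator, hx, max_eq_left hx.le]
      · simp [Set.indicator, hx, max_eq_right (not_lt.1 hx)]
    rw [this, integral_indicator hS₀]
  -- the two sup sets
  set A := {x : ℝ | ∃ S T : Set ℝ, MeasurableSet S ∧ MeasurableSet T ∧
      x = |(θ (S ×ˢ T)).toReal - (μ S).toReal * (ν T).toReal|} with hA
  set B := {x : ℝ | ∃ T : Set ℝ, MeasurableSet T ∧
      x = ∫ x', max (∫ y in T, (f (x', y) - 1) ∂ν) 0 ∂μ} with hB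
  have hprob : ∀ E : Set (ℝ × ℝ), (θ E).toReal ≤ 1 := by
    intro E
    have := prob_le_one (μ := θ) (s := E)
    calc (θ E).toReal ≤ (1 : ENNReal).toReal :=
      ENNReal.toReal_mono (by simp) this
    _ = 1 := by simp
  have hmul_mem : ∀ S T : Set ℝ, 0 ≤ (μ S).toReal * (ν T).toReal ∧
      (μ S).toReal * (ν T).toReal ≤ 1 := by
    intro S T
    constructor
    · positivity
    · have h1 : (μ S).toReal ≤ 1 := by
        calc (μ S).toReal ≤ (1 : ENNReal).toReal := ENNReal.toReal_mono (by simp) prob_le_one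
        _ = 1 := by simp
      have h2 : (ν T).toReal ≤ 1 := by
        calc (ν T).toReal ≤ (1 : ENNReal).toReal := ENNReal.toReal_mono (by simp) prob_le_one
        _ = 1 := by simp
      calc (μ S).toReal * (ν T).toReal ≤ 1 * 1 :=
        mul_le_mul h1 h2 ENNReal.toReal_nonneg one_pos.le
      _ = 1 := by simp
  -- A bounded above by 1
  have hA_bdd : ∀ a ∈ A, a ≤ 1 := by
    rintro a ⟨S, T, hS, hT, rfl⟩
    obtain ⟨hm0, hm1⟩ := hmul_mem S T
    rw [abs_le]
    constructor
    · have := hprob (S ×ˢ T)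
      have h0 : 0 ≤ (θ (S ×ˢ T)).toReal := ENNReal.toReal_nonneg
      linarith
    · have := hprob (S ×ˢ T)
      linarith
  -- every element of B equals an element of A (via S₀)
  have hBA : ∀ b ∈ B, ∃ a ∈ A, b = a := by
    rintro b ⟨T, hT, rfl⟩
    obtain ⟨hint, hmeas⟩ := hκ T hT
    set g : ℝ → ℝ := fun x => ∫ y in T, (f (x, y) - 1) ∂ν with hg
    set S₀ := {x | 0 < g x} with hS₀def
    have hS₀ : MeasurableSet S₀ :=
      measurableSet_lt measurable_const hmeas.measurable
    have h1 : ∫ x', max (g x') 0 ∂μ = ∫ x in S₀, g x ∂μ := hpos T hT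
    have h2 : ∫ x in S₀, g x ∂μ
        = (θ (S₀ ×ˢ T)).toReal - (μ S₀).toReal * (ν T).toReal := (key S₀ T hS₀ hT).symm
    have h3 : 0 ≤ ∫ x in S₀, g x ∂μ := by
      apply setIntegral_nonneg hS₀
      intro x hx
      exact (le_of_lt hx)
    refine ⟨|(θ (S₀ ×ˢ T)).toReal - (μ S₀).toReal * (ν T).toReal|,
      ⟨S₀, T, hS₀, hT, rfl⟩, ?_⟩
    rw [h1, h2, abs_of_nonneg (h2 ▸ h3)]
  -- every element of A is ≤ some element of B
  have hAB : ∀ a ∈ A, ∃ b ∈ B, a ≤ b := by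
    rintro a ⟨S, T, hS, hT, rfl⟩
    obtain ⟨hint, hmeas⟩ := hκ T hT
    set g : ℝ → ℝ := fun x => ∫ y in T, (f (x, y) - 1) ∂ν with hg
    refine ⟨∫ x', max (g x') 0 ∂μ, ⟨T, hT, rfl⟩, ?_⟩
    rw [key S T hS hT]
    have hmax_int : Integrable (fun x => max (g x) 0) μ := hint.pos_part
    have hmax_nonneg : 0 ≤ᵐ[μ] fun x => max (g x) 0 :=
      Filter.Eventually.of_forall fun x => le_max_right _ _
    have hub : ∀ U : Set ℝ, MeasurableSet U → ∫ x in U, g x ∂μ ≤ ∫ x', max (g x') 0 ∂μ := by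
      intro U hU
      calc ∫ x in U, g x ∂μ ≤ ∫ x in U, max (g x) 0 ∂μ :=
            integral_mono hint.restrict hmax_int.restrict fun x => le_max_left _ _
      _ ≤ ∫ x', max (g x') 0 ∂μ := setIntegral_le_integral hmax_int hmax_nonneg
    rw [abs_le]
    constructor
    · have hsplit : ∫ x in S, g x ∂μ + ∫ x in Sᶜ, g x ∂μ = ∫ x, g x ∂μ :=
        integral_add_compl hS hint
      have hz : ∫ x, g x ∂μ = 0 := hzero T hT
      have := hub Sᶜ hS.compl
      linarith
    · exact hub S hS
  -- conclude
  have hB_bdd : ∀ b ∈ B, b ≤ 1 := by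
    intro b hb
    obtain ⟨a, ha, hba⟩ := hBA b hb
    exact hba ▸ hA_bdd a ha
  have hA_ne : A.Nonempty := ⟨_, ∅, ∅, MeasurableSet.empty, MeasurableSet.empty, rfl⟩
  have hB_ne : B.Nonempty := ⟨_, ∅, MeasurableSet.empty, rfl⟩
  apply le_antisymm
  · apply csSup_le hA_ne
    intro a ha
    obtain ⟨b, hb, hab⟩ := hAB a ha
    exact hab.trans (le_csSup ⟨1, fun x hx => hB_bdd x hx⟩ hb)
  · apply csSup_le hB_ne
    intro b hb
    obtain ⟨a, ha, hba⟩ := hBA b hb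
    exact hba ▸ le_csSup ⟨1, fun x hx => hA_bdd x hx⟩ ha
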